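/- If a finite sequence of states from a finite alphabet has empirical conditional transition frequencies within a relative factor δ of the true Markov transition probabilities (i.e., |q̂(φ_i|φ_j) − q(φ_i|φ_j)| ≤ δ·q(φ_i|φ_j) for all states), then the negative normalized log-probability of the sequence differs from the entropy rate H by at most η̂ = δ·H; that is, H − δH ≤ −(1/n)·log q(π_n) ≤ H + δH. -/

import Mathlib

open Finset

/-- **Typicality for Markov sequences (Theorem 1).**
`S` is the finite set of transition-conditional pairs `ψ` appearing in the chain,
`q ψ` the true (positive) transition probability of pair `ψ`, `ℓ ψ` the number of
occurrences of `ψ` in the sequence `π_n` of length `n`, so that the probability of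
the sequence is `q(π_n) = ∏ ψ, q ψ ^ ℓ ψ` and the empirical conditional distribution
is `ℓ ψ / n`.  If `|ℓ ψ / n - q ψ| ≤ δ * q ψ` for all `ψ`, then
`H - δH ≤ -(1/n) log q(π_n) ≤ H + δH` where `H = -∑ ψ, q ψ * log (q ψ)`. -/
theorem markov_strong_typicality_implies_weak
    {S : Type*} [Fintype S] (n : ℕ) (hn : 0 < n) (δ : ℝ) (hδ : 0 ≤ δ)
    (q : S → ℝ) (hqpos : ∀ ψ, 0 < q ψ) (hqle : ∀ ψ, q ψ ≤ 1)
    (hqsum : ∑ ψ, q ψ = 1)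
    (ℓ : S → ℕ) (hℓsum : ∑ ψ, ℓ ψ = n)
    (htyp : ∀ ψ, |(ℓ ψ : ℝ) / n - q ψ| ≤ δ * q ψ)
    (H : ℝ) (hH : H = ∑ ψ, (-(q ψ * Real.log (q ψ)))) :
    H - δ * H ≤ -(1 / (n : ℝ)) * Real.log (∏ ψ, q ψ ^ ℓ ψ) ∧
      -(1 / (n : ℝ)) * Real.log (∏ ψ, q ψ ^ ℓ ψ) ≤ H + δ * H := by
  have hn' : (0:ℝ) < n := by exact_mod_cast hn
  have key : -(1 / (n : ℝ)) * Real.log (∏ ψ, q ψ ^ ℓ ψ)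
      = ∑ ψ, ((ℓ ψ : ℝ) / n) * (-(Real.log (q ψ))) := by
    rw [Real.log_prod (fun ψ _ => pow_ne_zero _ (hqpos ψ).ne')]
    simp only [Real.log_pow]
    rw [Finset.mul_sum]
    apply Finset.sum_congr rfl
    intro ψ _
    field_simp
  have hdiff : |(∑ ψ, ((ℓ ψ : ℝ) / n) * (-(Real.log (q ψ)))) - H| ≤ δ * H := by
    rw [hH, ← Finset.sum_sub_distrib]
    calc |∑ ψ, (((ℓ ψ : ℝ) / n) * (-(Real.log (q ψ))) - (-(q ψ * Real.log (q ψ))))|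
        ≤ ∑ ψ, |((ℓ ψ : ℝ) / n) * (-(Real.log (q ψ))) - (-(q ψ * Real.log (q ψ)))| :=
          Finset.abs_sum_le_sum_abs _ _
      _ ≤ ∑ ψ, δ * (-(q ψ * Real.log (q ψ))) := by
          apply Finset.sum_le_sum
          intro ψ _
          have hlog : 0 ≤ -(Real.log (q ψ)) := by
            simpa using Real.log_nonpos (hqpos ψ).le (hqle ψ)
          have : ((ℓ ψ : ℝ) / n) * (-(Real.log (q ψ))) - (-(q ψ * Real.log (q ψ)))
              = ((ℓ ψ : ℝ) / n - q ψ) * (-(Real.log (q ψ))) := by ring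
          rw [this, abs_mul, abs_of_nonneg hlog]
          have := mul_le_mul_of_nonneg_right (htyp ψ) hlog
          calc |(ℓ ψ : ℝ) / n - q ψ| * -(Real.log (q ψ))
              ≤ δ * q ψ * -(Real.log (q ψ)) := this
            _ = δ * (-(q ψ * Real.log (q ψ))) := by ring
      _ = δ * ∑ ψ, (-(q ψ * Real.log (q ψ))) := (Finset.mul_sum _ _ _).symm
  rw [key]
  constructor
  · linarith [abs_le.mp hdiff]
  · linarith [abs_le.mp hdiff]
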